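/- Let f : {-1,1}^n → {-1,1} be a Boolean function, let ε ≥ 0 be a real number, and let d be a natural number. Then deg_ε(f) > d if and only if there exists a function φ : {-1,1}^n → ℝ such that (1) Σ_{x ∈ {-1,1}^n} f(x)·φ(x) > ε, (2) Σ_{x ∈ {-1,1}^n} |φ(x)| = 1, and (3) φ has pure high degree d. -/

import Mathlib

/-- The Boolean hypercube `{-1,1}^n` as a finite set of points in `ℝ^n`. -/
noncomputable def cube (n : ℕ) : Finset (Fin n → ℝ) :=
  Fintype.piFinset fun _ => ({1, -1} : Finset ℝ)

/-- The `ε`-approximate degree of `f : {-1,1}^n → ℝ`: the least `d` such that some real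
polynomial of total degree at most `d` approximates `f` pointwise within `ε` on the cube. -/
noncomputable def approxDeg {n : ℕ} (f : (Fin n → ℝ) → ℝ) (ε : ℝ) : ℕ :=
  sInf {d : ℕ | ∃ p : MvPolynomial (Fin n) ℝ, p.totalDegree ≤ d ∧
    ∀ x ∈ cube n, |MvPolynomial.eval x p - f x| ≤ ε}

open MvPolynomial Metric

lemma cube_mem_cases {n : ℕ} {x : Fin n → ℝ} (hx : x ∈ cube n) (i : Fin n) :
    x i = 1 ∨ x i = -1 := by
  have := Fintype.mem_piFinset.mp hx i
  simpa using this

lemma cube_pow {x : ℝ} (hx : x = 1 ∨ x = -1) (k : ℕ) :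
    x ^ k = if Odd k then x else 1 := by
  rcases hx with rfl | rfl
  · simp
  · rcases Nat.even_or_odd k with hk | hk
    · simp [hk.neg_one_pow, Nat.not_odd_iff_even.mpr hk]
    · simp [hk.neg_one_pow, hk]

/-- Pure-high-degree functions kill all polynomials of small total degree on the cube. -/
lemma sum_phi_eval {n d : ℕ} (φ : (Fin n → ℝ) → ℝ)
    (hφ : ∀ S : Finset (Fin n), S.card ≤ d →
      (∑ x ∈ cube n, φ x * ∏ i ∈ S, x i) = 0)
    (p : MvPolynomial (Fin n) ℝ) (hp : p.totalDegree ≤ d) :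
    ∑ x ∈ cube n, φ x * MvPolynomial.eval x p = 0 := by
  classical
  have key : ∀ x ∈ cube n, φ x * MvPolynomial.eval x p
      = ∑ α ∈ p.support, coeff α p *
          (φ x * ∏ i ∈ α.support.filter (fun i => Odd (α i)), x i) := by
    intro x hx
    rw [eval_eq, Finset.mul_sum]
    refine Finset.sum_congr rfl fun α _ => ?_
    have hprod : ∏ i ∈ α.support, x i ^ α i
        = ∏ i ∈ α.support.filter (fun i => Odd (α i)), x i := by
      rw [Finset.prod_filter]
      exact Finset.prod_congr rfl fun i _ => cube_pow (cube_mem_cases hx i) (α i)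
    rw [hprod]; ring
  rw [Finset.sum_congr rfl key, Finset.sum_comm]
  refine Finset.sum_eq_zero fun α hα => ?_
  have hcard : (α.support.filter fun i => Odd (α i)).card ≤ d := by
    have h1 : (α.support.filter fun i => Odd (α i)).card
        ≤ ∑ i ∈ α.support.filter (fun i => Odd (α i)), α i := by
      rw [Finset.card_eq_sum_ones]
      exact Finset.sum_le_sum fun i hi => (Finset.mem_filter.mp hi).2.pos
    have h2 : ∑ i ∈ α.support.filter (fun i => Odd (α i)), α i
        ≤ ∑ i ∈ α.support, α i :=
      Finset.sum_le_sum_of_subset (Finset.filter_subset _ _)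
    have h3 : ∑ i ∈ α.support, α i ≤ d := by
      have := MvPolynomial.le_totalDegree hα
      rw [Finsupp.sum] at this
      exact this.trans hp
    omega
  rw [← Finset.mul_sum, hφ _ hcard, mul_zero]

/-- Exact multilinear interpolation on the cube. -/
lemma exists_interp {n : ℕ} (f : (Fin n → ℝ) → ℝ) :
    ∃ p : MvPolynomial (Fin n) ℝ, ∀ x ∈ cube n, MvPolynomial.eval x p = f x := by
  classical
  refine ⟨∑ y ∈ cube n, C (f y / 2 ^ n) * ∏ i, (C (y i) * X i + 1), fun x hx => ?_⟩
  rw [map_sum]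
  have hterm : ∀ y ∈ cube n,
      MvPolynomial.eval x (C (f y / 2 ^ n) * ∏ i, (C (y i) * X i + 1))
        = f y / 2 ^ n * ∏ i, (y i * x i + 1) := by
    intro y _
    simp [eval_prod]
  rw [Finset.sum_congr rfl hterm, Finset.sum_eq_single_of_mem x hx]
  · have h2 : ∀ i, x i * x i + 1 = 2 := fun i => by
      rcases cube_mem_cases hx i with h | h <;> rw [h] <;> norm_num
    rw [Finset.prod_congr rfl fun i _ => h2 i, Finset.prod_const, Finset.card_univ, Fintype.card_fin]
    have : (0:ℝ) < 2 ^ n := by positivity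
    field_simp
  · intro y hy hyx
    obtain ⟨i, hi⟩ : ∃ i, y i ≠ x i := by
      by_contra h; push_neg at h; exact hyx (funext h)
    have hzero : y i * x i + 1 = 0 := by
      rcases cube_mem_cases hy i with h1 | h1 <;> rcases cube_mem_cases hx i with h2 | h2 <;>
        simp_all
    rw [Finset.prod_eq_zero (Finset.mem_univ i) hzero, mul_zero]

/-- A dual witness rules out any good low-degree approximation. -/
lemma backward_aux {n d : ℕ} (f : (Fin n → ℝ) → ℝ) (ε : ℝ)
    (φ : (Fin n → ℝ) → ℝ)
    (h1 : ε < ∑ x ∈ cube n, f x * φ x)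
    (h2 : (∑ x ∈ cube n, |φ x|) = 1)
    (h3 : ∀ S : Finset (Fin n), S.card ≤ d →
      (∑ x ∈ cube n, φ x * ∏ i ∈ S, x i) = 0)
    (p : MvPolynomial (Fin n) ℝ) (hp : p.totalDegree ≤ d)
    (happ : ∀ x ∈ cube n, |MvPolynomial.eval x p - f x| ≤ ε) : False := by
  have h0 := sum_phi_eval φ h3 p hp
  have e1 : ∑ x ∈ cube n, f x * φ x
      = ∑ x ∈ cube n, (f x - MvPolynomial.eval x p) * φ x := by
    have : ∑ x ∈ cube n, (f x - MvPolynomial.eval x p) * φ x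
        = ∑ x ∈ cube n, f x * φ x - ∑ x ∈ cube n, φ x * MvPolynomial.eval x p := by
      rw [← Finset.sum_sub_distrib]
      exact Finset.sum_congr rfl fun x _ => by ring
    rw [this, h0, sub_zero]
  have e2 : ∑ x ∈ cube n, (f x - MvPolynomial.eval x p) * φ x ≤ ε := by
    calc ∑ x ∈ cube n, (f x - MvPolynomial.eval x p) * φ x
        ≤ ∑ x ∈ cube n, ε * |φ x| := by
          refine Finset.sum_le_sum fun x hx => ?_
          calc (f x - MvPolynomial.eval x p) * φ x
              ≤ |(f x - MvPolynomial.eval x p) * φ x| := le_abs_self _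
            _ = |f x - MvPolynomial.eval x p| * |φ x| := abs_mul _ _
            _ ≤ ε * |φ x| := by
                refine mul_le_mul_of_nonneg_right ?_ (abs_nonneg _)
                rw [abs_sub_comm]; exact happ x hx
      _ = ε * ∑ x ∈ cube n, |φ x| := (Finset.mul_sum _ _ _).symm
      _ = ε := by rw [h2, mul_one]
  rw [e1] at h1; linarith

/-- The subspace of functions on the cube given by polynomials of total degree ≤ d. -/
noncomputable def Vsub (n d : ℕ) : Submodule ℝ ((↥(cube n)) → ℝ) where
  carrier := {g | ∃ p : MvPolynomial (Fin n) ℝ, p.totalDegree ≤ d ∧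
    ∀ x : ↥(cube n), g x = MvPolynomial.eval (x : Fin n → ℝ) p}
  add_mem' := by
    rintro a b ⟨p, hp, ha⟩ ⟨q, hq, hb⟩
    exact ⟨p + q, (totalDegree_add p q).trans (max_le hp hq),
      fun x => by simp [ha x, hb x]⟩
  zero_mem' := ⟨0, by simp, fun x => by simp⟩
  smul_mem' := by
    rintro c a ⟨p, hp, ha⟩
    refine ⟨c • p, (totalDegree_smul_le c p).trans hp, fun x => ?_⟩
    simp [ha x, smul_eq_C_mul]

lemma forward_aux {n : ℕ} (f : (Fin n → ℝ) → ℝ) (ε : ℝ) (hε : 0 ≤ ε) (d : ℕ)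
    (hA : ∀ p : MvPolynomial (Fin n) ℝ, p.totalDegree ≤ d →
      ¬ (∀ x ∈ cube n, |MvPolynomial.eval x p - f x| ≤ ε)) :
    ∃ φ : (Fin n → ℝ) → ℝ,
      (∑ x ∈ cube n, f x * φ x) > ε ∧
      (∑ x ∈ cube n, |φ x|) = 1 ∧
      (∀ S : Finset (Fin n), S.card ≤ d →
        (∑ x ∈ cube n, φ x * ∏ i ∈ S, x i) = 0) := by
  classical
  have hVcl : IsClosed ((Vsub n d : Submodule ℝ _) : Set ((↥(cube n)) → ℝ)) :=
    Submodule.closed_of_finiteDimensional _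
  set fE : (↥(cube n)) → ℝ := fun x => f ↑x with hfE
  obtain ⟨g₀, hg₀V, hdist⟩ :=
    hVcl.exists_infDist_eq_dist ⟨0, (Vsub n d).zero_mem⟩ fE
  have hδ : ε < infDist fE ((Vsub n d : Submodule ℝ _) : Set _) := by
    rw [hdist, dist_eq_norm]
    by_contra hle
    push_neg at hle
    obtain ⟨p, hp, hg₀⟩ := hg₀V
    refine hA p hp fun x hx => ?_
    have h1 := norm_le_pi_norm (fE - g₀) ⟨x, hx⟩
    rw [Pi.sub_apply, Real.norm_eq_abs, hfE] at h1
    simp only [hg₀ ⟨x, hx⟩] at h1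
    rw [abs_sub_comm]
    exact h1.trans hle
  haveI := hVcl
  have hnorm : ‖(Submodule.Quotient.mk fE : _ ⧸ (Vsub n d))‖
      = infDist fE ((Vsub n d : Submodule ℝ _) : Set _) := QuotientAddGroup.norm_mk fE
  have hne : (Submodule.Quotient.mk fE : _ ⧸ (Vsub n d)) ≠ 0 := by
    intro h
    rw [h, norm_zero] at hnorm
    rw [← hnorm] at hδ
    linarith
  obtain ⟨g, hg1, hg2⟩ := exists_dual_vector ℝ _ (norm_ne_zero_iff.mpr hne)
  set L : ((↥(cube n)) → ℝ) →ₗ[ℝ] ℝ := g.toLinearMap.comp (Vsub n d).mkQ with hL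
  have hLdef : ∀ h : (↥(cube n)) → ℝ, L h = g (Submodule.Quotient.mk h) := fun h => rfl
  have hLle : ∀ h : (↥(cube n)) → ℝ, |L h| ≤ ‖h‖ := by
    intro h
    calc |L h| = ‖g (Submodule.Quotient.mk h)‖ := by rw [hLdef, Real.norm_eq_abs]
      _ ≤ ‖g‖ * ‖(Submodule.Quotient.mk h : _ ⧸ (Vsub n d))‖ := g.le_opNorm _
      _ = ‖(Submodule.Quotient.mk h : _ ⧸ (Vsub n d))‖ := by rw [hg1, one_mul]
      _ ≤ ‖h‖ := Submodule.Quotient.norm_mk_le _ _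
  have hLV : ∀ h ∈ Vsub n d, L h = 0 := by
    intro h hh
    rw [hLdef, (Submodule.Quotient.mk_eq_zero _).mpr hh, map_zero]
  set ψ : (↥(cube n)) → ℝ := fun x => L (Pi.single x 1) with hψ
  have hLsum : ∀ h : (↥(cube n)) → ℝ, L h = ∑ x : ↥(cube n), h x * ψ x := by
    intro h
    conv_lhs => rw [← Finset.univ_sum_single h]
    rw [map_sum]
    refine Finset.sum_congr rfl fun x _ => ?_
    have hsingle : Pi.single x (h x) = h x • (Pi.single x 1 : (↥(cube n)) → ℝ) := by
      ext y
      by_cases hxy : y = x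
      · subst hxy; simp
      · simp [Pi.single_eq_of_ne hxy]
    rw [hsingle, map_smul, smul_eq_mul]
  set s := ∑ x : ↥(cube n), |ψ x| with hs
  have hfψ : ∑ x : ↥(cube n), f ↑x * ψ x
      = ‖(Submodule.Quotient.mk fE : _ ⧸ (Vsub n d))‖ := by
    rw [← hLsum fE, hLdef, hg2]; simp
  have hδ' : ε < ∑ x : ↥(cube n), f ↑x * ψ x := by
    rw [hfψ, hnorm]; exact hδ
  have hs1 : s ≤ 1 := by
    set u : (↥(cube n)) → ℝ := fun x => if 0 ≤ ψ x then 1 else -1 with hu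
    have hLu : L u = s := by
      rw [hLsum u, hs]
      refine Finset.sum_congr rfl fun x _ => ?_
      by_cases h : 0 ≤ ψ x
      · simp [hu, h, abs_of_nonneg h]
      · push_neg at h
        simp [hu, not_le.mpr h, abs_of_neg h]
    have hu1 : ‖u‖ ≤ 1 := by
      refine (pi_norm_le_iff_of_nonneg zero_le_one).mpr fun x => ?_
      by_cases h : 0 ≤ ψ x <;> simp [hu, h, Real.norm_eq_abs]
    calc s = L u := hLu.symm
      _ ≤ |L u| := le_abs_self _
      _ ≤ ‖u‖ := hLle u
      _ ≤ 1 := hu1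
  have hs0 : 0 < s := by
    rcases (Finset.sum_nonneg fun x _ => abs_nonneg (ψ x)).eq_or_lt with h | h
    · exfalso
      have hz : ∀ x : ↥(cube n), ψ x = 0 := by
        intro x
        have := (Finset.sum_eq_zero_iff_of_nonneg
          (fun x _ => abs_nonneg (ψ x))).mp h.symm x (Finset.mem_univ x)
        exact abs_eq_zero.mp this
      have hzz : ∑ x : ↥(cube n), f ↑x * ψ x = 0 :=
        Finset.sum_eq_zero fun x _ => by rw [hz x, mul_zero]
      rw [hzz] at hδ'
      linarith
    · exact h
  have horth : ∀ S : Finset (Fin n), S.card ≤ d →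
      ∑ x : ↥(cube n), (∏ i ∈ S, (x : Fin n → ℝ) i) * ψ x = 0 := by
    intro S hS
    have hmem : (fun x : ↥(cube n) => ∏ i ∈ S, (x : Fin n → ℝ) i) ∈ Vsub n d := by
      refine ⟨∏ i ∈ S, X i, ?_, fun x => ?_⟩
      · refine (totalDegree_finset_prod S _).trans ?_
        calc ∑ i ∈ S, (X i : MvPolynomial (Fin n) ℝ).totalDegree
            = ∑ i ∈ S, 1 := Finset.sum_congr rfl fun i _ => totalDegree_X i
          _ = S.card := by simp
          _ ≤ d := hS
      · simp [eval_prod]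
    have h0 := hLV _ hmem
    rwa [hLsum] at h0
  refine ⟨fun y => if hy : y ∈ cube n then ψ ⟨y, hy⟩ / s else 0, ?_, ?_, ?_⟩
  · rw [← Finset.sum_coe_sort (cube n)]
    have hc : ∀ x : ↥(cube n),
        f ↑x * (if hy : (x : Fin n → ℝ) ∈ cube n then ψ ⟨↑x, hy⟩ / s else 0)
          = f ↑x * ψ x / s := by
      intro x
      rw [dif_pos x.2, Subtype.coe_eta, mul_div_assoc]
    rw [Finset.sum_congr rfl fun x _ => hc x, ← Finset.sum_div]
    have h2 : (∑ x : ↥(cube n), f ↑x * ψ x) ≤ (∑ x : ↥(cube n), f ↑x * ψ x) / s := by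
      rw [le_div_iff₀ hs0]
      nlinarith
    linarith
  · rw [← Finset.sum_coe_sort (cube n)]
    have hc : ∀ x : ↥(cube n),
        |if hy : (x : Fin n → ℝ) ∈ cube n then ψ ⟨↑x, hy⟩ / s else 0| = |ψ x| / s := by
      intro x
      rw [dif_pos x.2, Subtype.coe_eta, abs_div, abs_of_pos hs0]
    rw [Finset.sum_congr rfl fun x _ => hc x, ← Finset.sum_div, ← hs, div_self hs0.ne']
  · intro S hS
    rw [← Finset.sum_coe_sort (cube n)]
    have hc : ∀ x : ↥(cube n),
        (if hy : (x : Fin n → ℝ) ∈ cube n then ψ ⟨↑x, hy⟩ / s else 0)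
            * ∏ i ∈ S, (x : Fin n → ℝ) i
          = ((∏ i ∈ S, (x : Fin n → ℝ) i) * ψ x) / s := by
      intro x
      rw [dif_pos x.2, Subtype.coe_eta]
      ring
    rw [Finset.sum_congr rfl fun x _ => hc x, ← Finset.sum_div, horth S hS, zero_div]

theorem stmt0 {n : ℕ} (f : (Fin n → ℝ) → ℝ)
    (hf : ∀ x ∈ cube n, f x = 1 ∨ f x = -1)
    (ε : ℝ) (hε : 0 ≤ ε) (d : ℕ) :
    approxDeg f ε > d ↔
      ∃ φ : (Fin n → ℝ) → ℝ,
        (∑ x ∈ cube n, f x * φ x) > ε ∧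
        (∑ x ∈ cube n, |φ x|) = 1 ∧
        (∀ S : Finset (Fin n), S.card ≤ d →
          (∑ x ∈ cube n, φ x * ∏ i ∈ S, x i) = 0) := by
  constructor
  · intro h
    refine forward_aux f ε hε d fun p hp happ => ?_
    have hle : approxDeg f ε ≤ d := Nat.sInf_le ⟨p, hp, happ⟩
    omega
  · rintro ⟨φ, h1, h2, h3⟩
    obtain ⟨p₀, hp₀⟩ := exists_interp f
    have hnonempty : {d' : ℕ | ∃ p : MvPolynomial (Fin n) ℝ, p.totalDegree ≤ d' ∧
        ∀ x ∈ cube n, |MvPolynomial.eval x p - f x| ≤ ε}.Nonempty :=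
      ⟨p₀.totalDegree, p₀, le_refl _, fun x hx => by rw [hp₀ x hx]; simpa⟩
    by_contra hle
    push_neg at hle
    obtain ⟨p, hp, happ⟩ := Nat.sInf_mem hnonempty
    exact backward_aux f ε φ h1 h2 h3 p (hp.trans hle) happ
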